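/- Fix finite types X and Z, a finite additive abelian group Y, a non-negative integer T, a distinguished initial basis vector e_init = e_{(x₀, 0, z₀)} of the Hilbert space ℂ^{X × Y × Z} (with second coordinate equal to 0 ∈ Y), a subset G ⊆ X × Y × Z of 'accepting' basis elements, and unitary operators U₀, U₁, …, U_T on ℂ^{X × Y × Z}. For a function f : X → Y, let U_f be the unitary on ℂ^{X × Y × Z} permuting basis vectors by e_{(x,y,z)} ↦ e_{(x, y + f(x), z)}, and define the acceptance probability P(f) := Σ_{b ∈ G} |⟨e_b, U_T U_f U_{T−1} U_f ⋯ U_1 U_f U₀ e_init⟩|², i.e., the squared norm of the projection onto span{e_b : b ∈ G} of the final state obtained by interleaving T applications of U_f with U₀, …, U_T. Then there exist a finite set S of partial functions s : X ⇀ Y, each with |dom(s)| ≤ 2T, and real numbers c_s for s ∈ S, such that for every function f : X → Y, P(f) = Σ_{s ∈ S} c_s · I_s(f). -/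

import Mathlib

open scoped BigOperators

noncomputable section

/-- The standard basis vector `e_b` of `ℂ^B`. -/
def basisVec {B : Type*} [DecidableEq B] (b : B) : B → ℂ :=
  fun b' => if b' = b then 1 else 0

/-- `runAlg U M T v = U_T M U_{T−1} M ⋯ U_1 M U_0 v`: the state after interleaving
`T` applications of the oracle matrix `M` with the unitaries `U_0, …, U_T`. -/
def runAlg {B : Type*} [Fintype B] (U : ℕ → Matrix B B ℂ) (M : Matrix B B ℂ) :
    ℕ → (B → ℂ) → (B → ℂ)
  | 0, v => (U 0).mulVec v
  | t + 1, v => (U (t + 1)).mulVec (M.mulVec (runAlg U M t v))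

/-- The oracle unitary `U_f` permuting basis vectors by `e_(x,y,z) ↦ e_(x, y + f x, z)`. -/
def oracleMatrix {X Y Z : Type*} [DecidableEq X] [DecidableEq Y] [DecidableEq Z]
    [AddCommGroup Y] (f : X → Y) : Matrix (X × Y × Z) (X × Y × Z) ℂ :=
  Matrix.of fun b' b => if b' = (b.1, b.2.1 + f b.1, b.2.2) then 1 else 0

open Classical in
/-- The indicator `I_s(f)`: equals `1` if the total function `f` extends the partial
function `s` (encoded as `X → Option Y`), and `0` otherwise. -/
def extendsIndicator {X Y : Type*} (s : X → Option Y) (f : X → Y) : ℝ :=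
  if ∀ x y, s x = some y → f x = y then 1 else 0

/-- The size of the domain of a partial function `s : X ⇀ Y`. -/
def domCard {X Y : Type*} [Fintype X] (s : X → Option Y) : ℕ :=
  (Finset.univ.filter fun x => (s x).isSome).card

/- ############ auxiliary material ############ -/

section Aux

open Classical

variable {X Y : Type*} [Fintype X] [DecidableEq X]

/-- Extend a partial function at one point. -/
def pext (s : X → Option Y) (x : X) (d : Y) : X → Option Y :=
  fun x' => if x' = x then some d else s x'

/-- Merge two partial functions (first takes precedence). -/
def pmerge (s s' : X → Option Y) : X → Option Y :=
  fun x => if (s x).isSome then s x else s' x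

lemma extendsIndicator_pos {s : X → Option Y} {f : X → Y}
    (h : ∀ x y, s x = some y → f x = y) : extendsIndicator s f = 1 := by
  unfold extendsIndicator; rw [if_pos h]

lemma extendsIndicator_neg {s : X → Option Y} {f : X → Y}
    (h : ¬ ∀ x y, s x = some y → f x = y) : extendsIndicator s f = 0 := by
  unfold extendsIndicator; rw [if_neg h]

lemma extendsIndicator_none (f : X → Y) :
    extendsIndicator (fun _ => (none : Option Y)) f = 1 :=
  extendsIndicator_pos (by intro x y h; cases h)

lemma domCard_none : domCard (fun _ : X => (none : Option Y)) = 0 := by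
  simp [domCard]

lemma domCard_pext (s : X → Option Y) (x : X) (d : Y) :
    domCard (pext s x d) ≤ domCard s + 1 := by
  unfold domCard
  have hsub : (Finset.univ.filter fun x' => ((pext s x d) x').isSome) ⊆
      insert x (Finset.univ.filter fun x' => (s x').isSome) := by
    intro x' hx'
    simp only [Finset.mem_filter, Finset.mem_univ, true_and, pext] at hx'
    by_cases h : x' = x
    · simp [h]
    · have hx2 := (Finset.mem_filter.mp hx').2
      rw [if_neg h] at hx2
      simp [Finset.mem_insert, h, hx2]
  calc _ ≤ _ := Finset.card_le_card hsub
    _ ≤ _ := Finset.card_insert_le _ _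

lemma domCard_pmerge (s s' : X → Option Y) :
    domCard (pmerge s s') ≤ domCard s + domCard s' := by
  unfold domCard
  have hsub : (Finset.univ.filter fun x => ((pmerge s s') x).isSome) ⊆
      (Finset.univ.filter fun x => (s x).isSome) ∪
        (Finset.univ.filter fun x => (s' x).isSome) := by
    intro x hx
    simp only [Finset.mem_filter, Finset.mem_univ, true_and, pmerge] at hx
    simp only [Finset.mem_union, Finset.mem_filter, Finset.mem_univ, true_and]
    by_cases h : (s x).isSome
    · exact Or.inl h
    · have hx2 := (Finset.mem_filter.mp hx).2
      rw [if_neg h] at hx2; exact Or.inr hx2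
  exact le_trans (Finset.card_le_card hsub) (Finset.card_union_le _ _)

lemma ind_mul_point (s : X → Option Y) (x : X) (d : Y) (f : X → Y) :
    extendsIndicator s f * (if f x = d then (1:ℝ) else 0) =
      (if s x = none ∨ s x = some d then (1:ℝ) else 0) *
        extendsIndicator (pext s x d) f := by
  by_cases hc : s x = none ∨ s x = some d
  · by_cases he : ∀ x' y, s x' = some y → f x' = y
    · by_cases hf : f x = d
      · have h2 : extendsIndicator (pext s x d) f = 1 := by
          apply extendsIndicator_pos
          intro x' y h
          unfold pext at h
          by_cases hxx : x' = x
          · rw [if_pos hxx] at h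
            cases h
            rw [hxx]
            exact hf
          · rw [if_neg hxx] at h
            exact he x' y h
        rw [extendsIndicator_pos he, h2, if_pos hf, if_pos hc]
      · have h2 : extendsIndicator (pext s x d) f = 0 := by
          apply extendsIndicator_neg
          intro hcon
          exact hf (hcon x d (by unfold pext; rw [if_pos rfl]))
        rw [extendsIndicator_pos he, h2, if_neg hf, if_pos hc]
    · have h2 : extendsIndicator (pext s x d) f = 0 := by
        apply extendsIndicator_neg
        intro hcon
        apply he
        intro x' y h
        by_cases hxx : x' = x
        · rcases hc with hc | hc
          · rw [hxx, hc] at h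
            cases h
          · rw [hxx, hc] at h
            cases h
            exact hcon x' d (by unfold pext; rw [if_pos hxx])
        · exact hcon x' y (by unfold pext; rw [if_neg hxx]; exact h)
      rw [extendsIndicator_neg he, h2, if_pos hc]
      ring
  · rw [if_neg hc, zero_mul]
    push_neg at hc
    obtain ⟨d', hd'⟩ := Option.ne_none_iff_exists'.mp hc.1
    by_cases he : ∀ x' y, s x' = some y → f x' = y
    · have hfx : f x = d' := he x d' hd'
      have hfd : f x ≠ d := by
        intro h
        rw [h] at hfx
        rw [← hfx] at hd'
        exact hc.2 hd'
      rw [if_neg hfd, mul_zero]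
    · rw [extendsIndicator_neg he, zero_mul]

lemma ind_mul_ind (s s' : X → Option Y) (f : X → Y) :
    extendsIndicator s f * extendsIndicator s' f =
      (if ∀ x y y', s x = some y → s' x = some y' → y = y' then (1:ℝ) else 0) *
        extendsIndicator (pmerge s s') f := by
  by_cases hc : ∀ x y y', s x = some y → s' x = some y' → y = y'
  · rw [if_pos hc, one_mul]
    by_cases he : ∀ x y, s x = some y → f x = y
    · by_cases he' : ∀ x y, s' x = some y → f x = y
      · have h2 : extendsIndicator (pmerge s s') f = 1 := by
          apply extendsIndicator_pos
          intro x y h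
          unfold pmerge at h
          by_cases hs : (s x).isSome
          · rw [if_pos hs] at h
            exact he x y h
          · rw [if_neg hs] at h
            exact he' x y h
        rw [extendsIndicator_pos he, extendsIndicator_pos he', h2, one_mul]
      · have h2 : extendsIndicator (pmerge s s') f = 0 := by
          apply extendsIndicator_neg
          intro hcon
          apply he'
          intro x y h
          by_cases hs : (s x).isSome
          · obtain ⟨y', hy'⟩ := Option.isSome_iff_exists.mp hs
            have hyy : y' = y := hc x y' y hy' h
            rw [← hyy]
            exact he x y' hy'
          · exact hcon x y (by unfold pmerge; rw [if_neg hs]; exact h)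
        rw [extendsIndicator_neg he', h2, mul_zero]
    · have h2 : extendsIndicator (pmerge s s') f = 0 := by
        apply extendsIndicator_neg
        intro hcon
        apply he
        intro x y h
        apply hcon x y
        unfold pmerge
        rw [if_pos (by rw [h]; rfl)]
        exact h
      rw [extendsIndicator_neg he, h2, zero_mul]
  · rw [if_neg hc, zero_mul]
    push_neg at hc
    obtain ⟨x, y, y', hy, hy', hne⟩ := hc
    by_cases he : ∀ x y, s x = some y → f x = y
    · have h2 : extendsIndicator s' f = 0 := by
        apply extendsIndicator_neg
        intro hcon
        exact hne ((he x y hy).symm.trans (hcon x y' hy'))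
      rw [h2, mul_zero]
    · rw [extendsIndicator_neg he, zero_mul]

end Aux

section Oracle

variable {X Y Z : Type*} [Fintype X] [Fintype Y] [Fintype Z]
  [DecidableEq X] [DecidableEq Y] [DecidableEq Z] [AddCommGroup Y]

lemma mulVec_apply {B : Type*} [Fintype B] (M : Matrix B B ℂ) (v : B → ℂ) (b : B) :
    M.mulVec v b = ∑ j, M b j * v j := rfl

lemma mulVec_sum {B ι : Type*} [Fintype B] (t : Finset ι) (M : Matrix B B ℂ)
    (a : ι → ℂ) (g : ι → B → ℂ) (b : B) :
    M.mulVec (fun j => ∑ i ∈ t, a i * g i j) b = ∑ i ∈ t, a i * M.mulVec (g i) b := by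
  rw [mulVec_apply]
  simp only [Finset.mul_sum]
  rw [Finset.sum_comm]
  apply Finset.sum_congr rfl
  intro i _
  rw [mulVec_apply, Finset.mul_sum]
  apply Finset.sum_congr rfl
  intro j _
  ring

lemma oracle_mulVec (f : X → Y) (v : X × Y × Z → ℂ) (b : X × Y × Z) :
    (oracleMatrix f).mulVec v b = v (b.1, b.2.1 - f b.1, b.2.2) := by
  rw [mulVec_apply]
  have hcond : ∀ b' : X × Y × Z,
      (oracleMatrix f) b b' * v b' =
        if b' = (b.1, b.2.1 - f b.1, b.2.2) then v b' else 0 := by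
    intro b'
    have hiff : (b = (b'.1, b'.2.1 + f b'.1, b'.2.2)) ↔
        (b' = (b.1, b.2.1 - f b.1, b.2.2)) := by
      constructor
      · rintro rfl
        simp
      · rintro rfl
        simp
    show (if b = (b'.1, b'.2.1 + f b'.1, b'.2.2) then (1:ℂ) else 0) * v b' = _
    rw [if_congr hiff rfl rfl, ite_mul, one_mul, zero_mul]
  rw [Finset.sum_congr rfl fun b' _ => hcond b',
    Finset.sum_ite_eq' Finset.univ (b.1, b.2.1 - f b.1, b.2.2) v]
  simp

lemma rep (U : ℕ → Matrix (X × Y × Z) (X × Y × Z) ℂ) (v₀ : X × Y × Z → ℂ) (T : ℕ) :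
    ∃ w : (X → Option Y) → (X × Y × Z) → ℂ,
      (∀ s : X → Option Y, ¬ domCard s ≤ T → w s = 0) ∧
      ∀ (f : X → Y) (b : X × Y × Z),
        runAlg U (oracleMatrix f) T v₀ b =
          ∑ s : X → Option Y, (extendsIndicator s f : ℂ) * w s b := by
  classical
  induction T with
  | zero =>
    refine ⟨fun s b => if s = (fun _ => none) then (U 0).mulVec v₀ b else 0, ?_, ?_⟩
    · intro s hs
      have hne : s ≠ (fun _ => none) := by
        rintro rfl
        exact hs (by simp [domCard_none])
      funext b
      simp [hne]
    · intro f b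
      show (U 0).mulVec v₀ b = ∑ s : X → Option Y, (extendsIndicator s f : ℂ) *
        (if s = (fun _ => none) then (U 0).mulVec v₀ b else 0)
      rw [Finset.sum_congr rfl fun s _ => by rw [mul_ite, mul_zero],
        Finset.sum_ite_eq' Finset.univ (fun _ => (none : Option Y))
          (fun s => (extendsIndicator s f : ℂ) * (U 0).mulVec v₀ b)]
      simp [extendsIndicator_none]
  | succ T ih =>
    obtain ⟨w, hsupp, hw⟩ := ih
    set compat : (X → Option Y) → X → Y → ℂ :=
      fun s x d => if s x = none ∨ s x = some d then 1 else 0 with hcompat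
    set w₁ : (X → Option Y) → (X × Y × Z) → ℂ := fun s' b =>
      ∑ s : X → Option Y, ∑ d : Y,
        if pext s b.1 d = s' then compat s b.1 d * w s (b.1, b.2.1 - d, b.2.2) else 0
      with hw₁
    have hw₁v : ∀ (s' : X → Option Y) (b : X × Y × Z), w₁ s' b =
        ∑ s : X → Option Y, ∑ d : Y,
          if pext s b.1 d = s' then compat s b.1 d * w s (b.1, b.2.1 - d, b.2.2) else 0 :=
      fun _ _ => rfl
    have hcompatv : ∀ (s : X → Option Y) (x : X) (d : Y),
        compat s x d = if s x = none ∨ s x = some d then (1:ℂ) else 0 := fun _ _ _ => rfl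
    refine ⟨fun s' => (U (T+1)).mulVec (w₁ s'), ?_, ?_⟩
    · intro s' hs'
      show (U (T+1)).mulVec (w₁ s') = 0
      have h0 : w₁ s' = 0 := by
        funext b
        rw [hw₁v s' b]
        show _ = (0:ℂ)
        apply Finset.sum_eq_zero
        intro s _
        apply Finset.sum_eq_zero
        intro d _
        by_cases h : pext s b.1 d = s'
        · rw [if_pos h]
          by_cases hT : domCard s ≤ T
          · exfalso
            apply hs'
            rw [← h]
            calc domCard (pext s b.1 d) ≤ domCard s + 1 := domCard_pext s b.1 d
              _ ≤ T + 1 := by omega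
          · rw [hsupp s hT]
            simp
        · rw [if_neg h]
      rw [h0, Matrix.mulVec_zero]
    · intro f b
      have key : (oracleMatrix f).mulVec (runAlg U (oracleMatrix f) T v₀) =
          fun b' => ∑ s' : X → Option Y, (extendsIndicator s' f : ℂ) * w₁ s' b' := by
        funext b'
        rw [oracle_mulVec, hw f]
        symm
        calc ∑ s' : X → Option Y, (extendsIndicator s' f : ℂ) * w₁ s' b'
            = ∑ s' : X → Option Y, ∑ s : X → Option Y, ∑ d : Y,
                (if pext s b'.1 d = s' then (extendsIndicator s' f : ℂ) *
                  (compat s b'.1 d * w s (b'.1, b'.2.1 - d, b'.2.2)) else 0) := by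
              apply Finset.sum_congr rfl
              intro s' _
              rw [hw₁v s' b', Finset.mul_sum]
              apply Finset.sum_congr rfl
              intro s _
              rw [Finset.mul_sum]
              apply Finset.sum_congr rfl
              intro d _
              rw [mul_ite, mul_zero]
          _ = ∑ s : X → Option Y, ∑ d : Y, (extendsIndicator (pext s b'.1 d) f : ℂ) *
                (compat s b'.1 d * w s (b'.1, b'.2.1 - d, b'.2.2)) := by
              rw [Finset.sum_comm]
              apply Finset.sum_congr rfl
              intro s _
              rw [Finset.sum_comm]
              apply Finset.sum_congr rfl
              intro d _
              rw [Finset.sum_ite_eq Finset.univ (pext s b'.1 d)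
                (fun s'' => (extendsIndicator s'' f : ℂ) *
                  (compat s b'.1 d * w s (b'.1, b'.2.1 - d, b'.2.2)))]
              simp
          _ = ∑ s : X → Option Y, (extendsIndicator s f : ℂ) *
                w s (b'.1, b'.2.1 - f b'.1, b'.2.2) := by
              apply Finset.sum_congr rfl
              intro s _
              have hcast : ∀ d : Y, (extendsIndicator (pext s b'.1 d) f : ℂ) *
                  compat s b'.1 d =
                  (extendsIndicator s f : ℂ) * (if f b'.1 = d then (1:ℂ) else 0) := by
                intro d
                rw [hcompatv]
                have hr := congrArg (fun r : ℝ => (r : ℂ)) (ind_mul_point s b'.1 d f)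
                simp only [Complex.ofReal_mul,
                  apply_ite (fun r : ℝ => (r : ℂ)), Complex.ofReal_one,
                  Complex.ofReal_zero] at hr
                rw [mul_comm, ← hr]
              calc ∑ d : Y, (extendsIndicator (pext s b'.1 d) f : ℂ) *
                    (compat s b'.1 d * w s (b'.1, b'.2.1 - d, b'.2.2))
                  = ∑ d : Y, ((extendsIndicator s f : ℂ) *
                      ((if f b'.1 = d then (1:ℂ) else 0) *
                        w s (b'.1, b'.2.1 - d, b'.2.2))) := by
                    apply Finset.sum_congr rfl
                    intro d _
                    rw [← mul_assoc, hcast d]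
                    ring
                _ = (extendsIndicator s f : ℂ) * w s (b'.1, b'.2.1 - f b'.1, b'.2.2) := by
                    rw [← Finset.mul_sum]
                    congr 1
                    rw [Finset.sum_congr rfl fun d _ => by rw [ite_mul, one_mul, zero_mul],
                      Finset.sum_ite_eq Finset.univ (f b'.1)
                        (fun d => w s (b'.1, b'.2.1 - d, b'.2.2))]
                    simp
      show (U (T+1)).mulVec ((oracleMatrix f).mulVec (runAlg U (oracleMatrix f) T v₀)) b
          = ∑ s' : X → Option Y, (extendsIndicator s' f : ℂ) * (U (T+1)).mulVec (w₁ s') b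
      rw [key]
      exact mulVec_sum Finset.univ (U (T+1))
        (fun s' => (extendsIndicator s' f : ℂ)) (fun s' => w₁ s') b

end Oracle

/- ############ main theorem ############ -/

theorem acceptance_probability_poly {X Y Z : Type*}
    [Fintype X] [Fintype Y] [Fintype Z]
    [DecidableEq X] [DecidableEq Y] [DecidableEq Z] [AddCommGroup Y]
    (T : ℕ) (x₀ : X) (z₀ : Z) (G : Finset (X × Y × Z))
    (U : ℕ → Matrix (X × Y × Z) (X × Y × Z) ℂ)
    (hU : ∀ t, t ≤ T → U t ∈ Matrix.unitaryGroup (X × Y × Z) ℂ) :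
    ∃ (S : Finset (X → Option Y)) (c : (X → Option Y) → ℝ),
      (∀ s ∈ S, domCard s ≤ 2 * T) ∧
      ∀ f : X → Y,
        (∑ b ∈ G, ‖runAlg U (oracleMatrix f) T (basisVec (x₀, (0 : Y), z₀)) b‖ ^ 2) =
          ∑ s ∈ S, c s * extendsIndicator s f := by
  classical
  obtain ⟨w, hsupp, hw⟩ := rep U (basisVec (x₀, (0 : Y), z₀)) T
  set K : (X → Option Y) → (X → Option Y) → ℝ := fun s s' =>
    ∑ b ∈ G, (w s b * (starRingEnd ℂ) (w s' b)).re with hK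
  set pc : (X → Option Y) → (X → Option Y) → ℝ := fun s s' =>
    if ∀ x y y', s x = some y → s' x = some y' → y = y' then K s s' else 0 with hpc
  refine ⟨Finset.univ.filter (fun m => domCard m ≤ 2 * T),
    fun m => ∑ p ∈ (Finset.univ ×ˢ Finset.univ).filter
      (fun p : (X → Option Y) × (X → Option Y) => pmerge p.1 p.2 = m), pc p.1 p.2,
    ?_, ?_⟩
  · intro s hs
    exact (Finset.mem_filter.mp hs).2
  · intro f
    have hz : ∀ z : ℂ, ‖z‖ ^ 2 = (z * (starRingEnd ℂ) z).re := by
      intro z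
      rw [Complex.mul_conj, Complex.ofReal_re, ← Complex.sq_norm]
    have hterm : ∀ b ∈ G, ‖runAlg U (oracleMatrix f) T (basisVec (x₀, (0 : Y), z₀)) b‖ ^ 2
        = ∑ s : X → Option Y, ∑ s' : X → Option Y,
            (extendsIndicator s f * extendsIndicator s' f) *
              (w s b * (starRingEnd ℂ) (w s' b)).re := by
      intro b _
      rw [hz, hw f b, map_sum, Finset.sum_mul_sum, Complex.re_sum]
      apply Finset.sum_congr rfl
      intro s _
      rw [Complex.re_sum]
      apply Finset.sum_congr rfl
      intro s' _
      rw [map_mul, Complex.conj_ofReal]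
      have hrearr : (extendsIndicator s f : ℂ) * w s b *
            ((extendsIndicator s' f : ℂ) * (starRingEnd ℂ) (w s' b))
          = ((extendsIndicator s f * extendsIndicator s' f : ℝ) : ℂ) *
              (w s b * (starRingEnd ℂ) (w s' b)) := by
        push_cast
        ring
      rw [hrearr, Complex.re_ofReal_mul]
    have hA : (∑ b ∈ G, ‖runAlg U (oracleMatrix f) T (basisVec (x₀, (0 : Y), z₀)) b‖ ^ 2)
        = ∑ s : X → Option Y, ∑ s' : X → Option Y,
            (extendsIndicator s f * extendsIndicator s' f) * K s s' := by
      rw [Finset.sum_congr rfl hterm, Finset.sum_comm]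
      apply Finset.sum_congr rfl
      intro s _
      rw [Finset.sum_comm]
      apply Finset.sum_congr rfl
      intro s' _
      simp only [hK]
      rw [Finset.mul_sum]
    have hK0 : ∀ s s' : X → Option Y, (¬ domCard s ≤ T ∨ ¬ domCard s' ≤ T) →
        K s s' = 0 := by
      intro s s' h
      simp only [hK]
      apply Finset.sum_eq_zero
      intro b _
      rcases h with h | h
      · rw [hsupp s h]
        simp
      · rw [hsupp s' h]
        simp
    have hpc0 : ∀ s s' : X → Option Y, pc s s' ≠ 0 →
        domCard s ≤ T ∧ domCard s' ≤ T := by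
      intro s s' h
      by_contra hcon
      apply h
      simp only [hpc]
      by_cases hc : ∀ x y y', s x = some y → s' x = some y' → y = y'
      · rw [if_pos hc]
        apply hK0
        by_cases h1 : domCard s ≤ T
        · exact Or.inr (fun h2 => hcon ⟨h1, h2⟩)
        · exact Or.inl h1
      · rw [if_neg hc]
    have hBC : ∀ s s' : X → Option Y,
        (extendsIndicator s f * extendsIndicator s' f) * K s s'
          = pc s s' * extendsIndicator (pmerge s s') f := by
      intro s s'
      rw [ind_mul_ind]
      by_cases hc : ∀ x y y', s x = some y → s' x = some y' → y = y'
      · simp only [hpc, if_pos hc]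
        ring
      · simp only [hpc, if_neg hc]
        ring
    rw [hA, Finset.sum_congr rfl (fun s _ => Finset.sum_congr rfl (fun s' _ => hBC s s')),
      ← Finset.sum_product']
    have hne : ∀ p ∈ (Finset.univ ×ˢ Finset.univ :
          Finset ((X → Option Y) × (X → Option Y))),
        pc p.1 p.2 * extendsIndicator (pmerge p.1 p.2) f ≠ 0 →
          domCard (pmerge p.1 p.2) ≤ 2 * T := by
      intro p _ h
      have hpcne : pc p.1 p.2 ≠ 0 := fun h0 => h (by rw [h0, zero_mul])
      obtain ⟨h1, h2⟩ := hpc0 p.1 p.2 hpcne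
      calc domCard (pmerge p.1 p.2) ≤ domCard p.1 + domCard p.2 := domCard_pmerge _ _
        _ ≤ 2 * T := by omega
    rw [← Finset.sum_filter_of_ne hne]
    have hmaps : ∀ p ∈ (Finset.univ ×ˢ Finset.univ :
          Finset ((X → Option Y) × (X → Option Y))).filter
            (fun p => domCard (pmerge p.1 p.2) ≤ 2 * T),
        pmerge p.1 p.2 ∈ Finset.univ.filter (fun m : X → Option Y => domCard m ≤ 2 * T) := by
      intro p hp
      simp only [Finset.mem_filter, Finset.mem_univ, true_and] at hp ⊢
      exact hp.2
    rw [← Finset.sum_fiberwise_of_maps_to hmaps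
      (fun p => pc p.1 p.2 * extendsIndicator (pmerge p.1 p.2) f)]
    apply Finset.sum_congr rfl
    intro m hm
    have hmc : domCard m ≤ 2 * T := by
      simpa using (Finset.mem_filter.mp hm).2
    have hsetEq : (((Finset.univ ×ˢ Finset.univ :
            Finset ((X → Option Y) × (X → Option Y))).filter
          (fun p => domCard (pmerge p.1 p.2) ≤ 2 * T)).filter
            (fun p => pmerge p.1 p.2 = m))
        = (Finset.univ ×ˢ Finset.univ).filter (fun p => pmerge p.1 p.2 = m) := by
      ext p
      simp only [Finset.mem_filter]
      constructor
      · rintro ⟨⟨h1, _⟩, h2⟩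
        exact ⟨h1, h2⟩
      · rintro ⟨h1, h2⟩
        exact ⟨⟨h1, by rw [h2]; exact hmc⟩, h2⟩
    rw [hsetEq, Finset.sum_mul]
    apply Finset.sum_congr rfl
    intro p hp
    rw [(Finset.mem_filter.mp hp).2]

end
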